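/- Fix N ≥ 1, t ∈ ℕ, a set Z ⊆ ℝ, vectors y_0, …, y_t ∈ ℝ^N, constants K_μ ≥ 0, μ_sup ≥ 0, K_INV ≥ 0, K_D ≥ 0, λ > 1. For each i ∈ {0,…,t} let μ_i : Z → ℝ^N and C_i : Z → Matrix (Fin N) (Fin N) ℝ satisfy, for all x, x' ∈ Z: C_i(x) is symmetric positive definite with all eigenvalues at least λ; ‖C_i(x)^{-1} − C_i(x')^{-1}‖₂ ≤ K_INV|x − x'|; |det(C_i(x)) − det(C_i(x'))| ≤ K_D|x − x'|; ‖μ_i(x) − μ_i(x')‖ ≤ K_μ|x − x'|; and ‖μ_i(x)‖ ≤ μ_sup. For x = (x_0,…,x_t) ∈ Z^{t+1} define Λ̂(x) := exp(−½ ∑_{i=0}^{t} ⟨y_i − μ_i(x_i), C_i(x_i)^{-1}(y_i − μ_i(x_i))⟩) / ∏_{i=0}^{t} sqrt(det(C_i(x_i))), and define Θ* := max_{i ∈ {0,…,t}} [ 2·K_μ·(‖y_i‖ + μ_sup)/λ + K_INV·(‖y_i‖ + μ_sup)² ]. Then for all x, x' ∈ Z^{t+1}: |Λ̂(x) − Λ̂(x')|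 ≤ ( Θ*/λ^{N(t+1)/2} + K_D/(2·λ^{N(t+2)/2}) ) · ∑_{i=0}^{t} |x_i − x_i'|. -/

import Mathlib

open Matrix

/-- The Euclidean norm on `ℝ^N`. -/
noncomputable def eucNorm {N : ℕ} (v : Fin N → ℝ) : ℝ :=
  Real.sqrt (∑ j, v j ^ 2)

/-- The spectral (operator) norm of a real `N × N` matrix: the supremum of the Euclidean
norms `‖M v‖` over vectors `v` in the Euclidean unit ball. -/
noncomputable def specNorm {N : ℕ} (M : Matrix (Fin N) (Fin N) ℝ) : ℝ :=
  ⨆ v : { v : Fin N → ℝ // eucNorm v ≤ 1 }, eucNorm (M.mulVec v)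

/-- The observation-normalized likelihood `Λ̂(x)` of a state trajectory `x` given fixed
observations `y_0, …, y_t`, for the conditionally Gaussian observation model
`y_i ~ N(μ_i(x_i), C_i(x_i))`. -/
noncomputable def Lhat {N t : ℕ} (y : Fin (t + 1) → Fin N → ℝ)
    (mu : Fin (t + 1) → ℝ → Fin N → ℝ)
    (C : Fin (t + 1) → ℝ → Matrix (Fin N) (Fin N) ℝ) (x : Fin (t + 1) → ℝ) : ℝ :=
  Real.exp (-(1 / 2) *
      ∑ i, (y i - mu i (x i)) ⬝ᵥ (C i (x i))⁻¹.mulVec (y i - mu i (x i))) /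
    ∏ i, Real.sqrt ((C i (x i)).det)

namespace Stmt17

variable {N : ℕ}

noncomputable def toE (v : Fin N → ℝ) : EuclideanSpace ℝ (Fin N) :=
  (WithLp.equiv 2 (Fin N → ℝ)).symm v

lemma toE_sub (u v : Fin N → ℝ) : toE (u - v) = toE u - toE v := rfl
lemma toE_smul (c : ℝ) (v : Fin N → ℝ) : toE (c • v) = c • toE v := rfl

lemma enorm_eq (v : Fin N → ℝ) : eucNorm v = ‖toE v‖ := by
  rw [EuclideanSpace.norm_eq]
  simp [eucNorm, toE, Real.norm_eq_abs, sq_abs]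

lemma enorm_nonneg (v : Fin N → ℝ) : 0 ≤ eucNorm v := Real.sqrt_nonneg _

lemma enorm_zero : eucNorm (0 : Fin N → ℝ) = 0 := by simp [eucNorm]

lemma dot_eq_inner (u w : Fin N → ℝ) : u ⬝ᵥ w = inner ℝ (toE u) (toE w) := by
  simp [dotProduct, toE, PiLp.inner_apply, RCLike.inner_apply, mul_comm]

lemma abs_dot_le (u w : Fin N → ℝ) : |u ⬝ᵥ w| ≤ eucNorm u * eucNorm w := by
  rw [dot_eq_inner, enorm_eq, enorm_eq]
  exact abs_real_inner_le_norm _ _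

lemma enorm_smul (c : ℝ) (v : Fin N → ℝ) : eucNorm (c • v) = |c| * eucNorm v := by
  rw [enorm_eq, enorm_eq, toE_smul, norm_smul, Real.norm_eq_abs]

lemma enorm_sub_le (u v : Fin N → ℝ) : eucNorm (u - v) ≤ eucNorm u + eucNorm v := by
  rw [enorm_eq, enorm_eq, enorm_eq, toE_sub]
  exact norm_sub_le _ _

lemma enorm_sub_comm (u v : Fin N → ℝ) : eucNorm (u - v) = eucNorm (v - u) := by
  rw [enorm_eq, enorm_eq, toE_sub, toE_sub, norm_sub_rev]

lemma abs_le_enorm (v : Fin N → ℝ) (j : Fin N) : |v j| ≤ eucNorm v := by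
  rw [← Real.sqrt_sq_eq_abs]
  exact Real.sqrt_le_sqrt
    (Finset.single_le_sum (f := fun j => v j ^ 2) (fun i _ => sq_nonneg _) (Finset.mem_univ j))

lemma bddAbove_spec (M : Matrix (Fin N) (Fin N) ℝ) :
    BddAbove (Set.range fun v : {v : Fin N → ℝ // eucNorm v ≤ 1} => eucNorm (M.mulVec v)) := by
  refine ⟨Real.sqrt (∑ i, (∑ j, |M i j|) ^ 2), ?_⟩
  rintro r ⟨⟨v, hv⟩, rfl⟩
  simp only [eucNorm]
  apply Real.sqrt_le_sqrt
  apply Finset.sum_le_sum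
  intro i _
  have h1 : |M.mulVec v i| ≤ ∑ j, |M i j| := by
    calc |M.mulVec v i| = |∑ j, M i j * v j| := by simp [Matrix.mulVec, dotProduct]
      _ ≤ ∑ j, |M i j * v j| := Finset.abs_sum_le_sum_abs _ _
      _ ≤ ∑ j, |M i j| := by
          apply Finset.sum_le_sum; intro j _
          rw [abs_mul]
          exact mul_le_of_le_one_right (abs_nonneg _) ((abs_le_enorm v j).trans hv)
  calc M.mulVec v i ^ 2 = |M.mulVec v i| ^ 2 := (sq_abs _).symm
    _ ≤ (∑ j, |M i j|) ^ 2 := by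
        apply pow_le_pow_left₀ (abs_nonneg _) h1

lemma le_specNorm_of_unit (M : Matrix (Fin N) (Fin N) ℝ) {v : Fin N → ℝ} (hv : eucNorm v ≤ 1) :
    eucNorm (M.mulVec v) ≤ specNorm M :=
  le_ciSup (bddAbove_spec M) ⟨v, hv⟩

lemma specNorm_nonneg (M : Matrix (Fin N) (Fin N) ℝ) : 0 ≤ specNorm M := by
  have := le_specNorm_of_unit M (v := 0) (by simp [enorm_zero])
  simpa [Matrix.mulVec_zero, enorm_zero] using this

lemma enorm_mulVec_le_spec (M : Matrix (Fin N) (Fin N) ℝ) (w : Fin N → ℝ) :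
    eucNorm (M.mulVec w) ≤ specNorm M * eucNorm w := by
  rcases eq_or_lt_of_le (enorm_nonneg w) with h | h
  · have hw : w = 0 := by
      have h0 : ‖toE w‖ = 0 := by rw [← enorm_eq]; exact h.symm
      have h1 : toE w = 0 := norm_eq_zero.mp h0
      simpa [toE] using h1
    subst hw
    simp [Matrix.mulVec_zero, enorm_zero, ← h]
  · set c := eucNorm w with hc
    have hu : eucNorm (c⁻¹ • w) = 1 := by
      rw [enorm_smul, abs_of_pos (inv_pos.2 h), ← hc, inv_mul_cancel₀ h.ne']
    have := le_specNorm_of_unit M (v := c⁻¹ • w) (le_of_eq hu)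
    rw [Matrix.mulVec_smul, enorm_smul, abs_of_pos (inv_pos.2 h)] at this
    calc eucNorm (M.mulVec w) = c * (c⁻¹ * eucNorm (M.mulVec w)) := by
          field_simp
      _ ≤ c * specNorm M := by
          apply mul_le_mul_of_nonneg_left this h.le
      _ = specNorm M * c := mul_comm _ _

lemma dot_self_eq (v : Fin N → ℝ) : v ⬝ᵥ v = eucNorm v ^ 2 := by
  rw [eucNorm, Real.sq_sqrt (Finset.sum_nonneg fun i _ => sq_nonneg _)]
  simp [dotProduct, sq]

lemma psd_dot_nonneg {M : Matrix (Fin N) (Fin N) ℝ} (hM : M.PosSemidef) (v : Fin N → ℝ) :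
    0 ≤ v ⬝ᵥ M.mulVec v := by
  simpa using hM.dotProduct_mulVec_nonneg v

lemma quad_lower {M : Matrix (Fin N) (Fin N) ℝ} {lam : ℝ}
    (h : (M - lam • (1 : Matrix (Fin N) (Fin N) ℝ)).PosSemidef) (v : Fin N → ℝ) :
    lam * (v ⬝ᵥ v) ≤ v ⬝ᵥ M.mulVec v := by
  have h2 := psd_dot_nonneg h v
  rw [Matrix.sub_mulVec, dotProduct_sub, smul_mulVec, Matrix.one_mulVec,
    dotProduct_smul] at h2
  simp only [smul_eq_mul] at h2
  linarith


lemma inv_mulVec_enorm_le {M : Matrix (Fin N) (Fin N) ℝ} {lam : ℝ} (hlam : 0 < lam)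
    (hM : M.PosDef) (h : (M - lam • (1 : Matrix (Fin N) (Fin N) ℝ)).PosSemidef)
    (v : Fin N → ℝ) : eucNorm (M⁻¹.mulVec v) ≤ eucNorm v / lam := by
  set u := M⁻¹.mulVec v with hu
  have hMu : M.mulVec u = v := by
    rw [hu, Matrix.mulVec_mulVec, Matrix.mul_nonsing_inv _ hM.det_pos.ne'.isUnit,
      Matrix.one_mulVec]
  have h1 : lam * (u ⬝ᵥ u) ≤ u ⬝ᵥ v := by
    have := quad_lower h u
    rwa [hMu] at this
  have h2 : u ⬝ᵥ v ≤ eucNorm u * eucNorm v := le_trans (le_abs_self _) (abs_dot_le u v)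
  rw [dot_self_eq] at h1
  rcases eq_or_lt_of_le (enorm_nonneg u) with h0 | h0
  · rw [← h0]; exact div_nonneg (enorm_nonneg v) hlam.le
  · rw [le_div_iff₀ hlam]
    nlinarith [enorm_nonneg v]

lemma quad_diff {lam Kmu musup KINV δ : ℝ} (hlam : 1 < lam) (hδ : 0 ≤ δ)
    (hKmu : 0 ≤ Kmu) (hKINV : 0 ≤ KINV)
    (y muA muB : Fin N → ℝ) (CA CB : Matrix (Fin N) (Fin N) ℝ)
    (hPA : CA.PosDef)
    (hEA : (CA - lam • (1 : Matrix (Fin N) (Fin N) ℝ)).PosSemidef)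
    (hmuL : eucNorm (muA - muB) ≤ Kmu * δ)
    (hmuA : eucNorm muA ≤ musup) (hmuB : eucNorm muB ≤ musup)
    (hspec : specNorm (CA⁻¹ - CB⁻¹) ≤ KINV * δ) :
    |(y - muA) ⬝ᵥ CA⁻¹.mulVec (y - muA) - (y - muB) ⬝ᵥ CB⁻¹.mulVec (y - muB)| ≤
      (2 * Kmu * (eucNorm y + musup) / lam + KINV * (eucNorm y + musup) ^ 2) * δ := by
  have hlam0 : (0:ℝ) < lam := lt_trans one_pos hlam
  set v := y - muA with hv
  set v' := y - muB with hv'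
  set A := CA⁻¹ with hA
  set A' := CB⁻¹ with hA'
  set Y := eucNorm y + musup with hYdef
  have key : v ⬝ᵥ A.mulVec v - v' ⬝ᵥ A'.mulVec v' =
      (v - v') ⬝ᵥ A.mulVec v + v' ⬝ᵥ A.mulVec (v - v') + v' ⬝ᵥ (A - A').mulVec v' := by
    simp only [sub_dotProduct, dotProduct_sub, Matrix.mulVec_sub, Matrix.sub_mulVec]
    ring
  have hvv' : v - v' = muB - muA := by
    rw [hv, hv']; ext j; simp
  have hd : eucNorm (v - v') ≤ Kmu * δ := by
    rw [hvv', enorm_sub_comm]; exact hmuL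
  have hbv : eucNorm v ≤ Y := le_trans (enorm_sub_le y muA) (by rw [hYdef]; linarith)
  have hbv' : eucNorm v' ≤ Y := le_trans (enorm_sub_le y muB) (by rw [hYdef]; linarith)
  have hY : (0:ℝ) ≤ Y := le_trans (enorm_nonneg muA) (by rw [hYdef]; linarith [enorm_nonneg y])
  have hAv : eucNorm (A.mulVec v) ≤ Y / lam := by
    refine le_trans (inv_mulVec_enorm_le hlam0 hPA hEA v) ?_
    gcongr
  have hAd : eucNorm (A.mulVec (v - v')) ≤ (Kmu * δ) / lam := by
    refine le_trans (inv_mulVec_enorm_le hlam0 hPA hEA (v - v')) ?_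
    gcongr
  have b1 : |(v - v') ⬝ᵥ A.mulVec v| ≤ (Kmu * δ) * (Y / lam) :=
    le_trans (abs_dot_le _ _) (mul_le_mul hd hAv (enorm_nonneg _) (by positivity))
  have b2 : |v' ⬝ᵥ A.mulVec (v - v')| ≤ Y * ((Kmu * δ) / lam) :=
    le_trans (abs_dot_le _ _) (mul_le_mul hbv' hAd (enorm_nonneg _) hY)
  have b3 : |v' ⬝ᵥ (A - A').mulVec v'| ≤ Y * ((KINV * δ) * Y) := by
    refine le_trans (abs_dot_le _ _) ?_
    have hmid : eucNorm ((A - A').mulVec v') ≤ (KINV * δ) * Y :=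
      le_trans (enorm_mulVec_le_spec _ _)
        (mul_le_mul hspec hbv' (enorm_nonneg _) (by positivity))
    exact mul_le_mul hbv' hmid (enorm_nonneg _) hY
  calc |v ⬝ᵥ A.mulVec v - v' ⬝ᵥ A'.mulVec v'|
      ≤ |(v - v') ⬝ᵥ A.mulVec v| + |v' ⬝ᵥ A.mulVec (v - v')| + |v' ⬝ᵥ (A - A').mulVec v'| := by
        rw [key]; exact le_trans (abs_add_le _ _) (by gcongr; exact abs_add_le _ _)
    _ ≤ (Kmu * δ) * (Y / lam) + Y * ((Kmu * δ) / lam) + Y * ((KINV * δ) * Y) :=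
        add_le_add (add_le_add b1 b2) b3
    _ = (2 * Kmu * Y / lam + KINV * Y ^ 2) * δ := by ring

lemma exp_lip {a b : ℝ} (ha : a ≤ 0) (hb : b ≤ 0) :
    |Real.exp a - Real.exp b| ≤ |a - b| := by
  wlog h : b ≤ a
  · rw [abs_sub_comm, abs_sub_comm a b]
    exact this hb ha (le_of_not_ge h)
  · have h1 : Real.exp b ≤ Real.exp a := Real.exp_le_exp.2 h
    rw [abs_of_nonneg (by linarith), abs_of_nonneg (by linarith)]
    have h2 := Real.add_one_le_exp (b - a)
    have h3 : Real.exp a ≤ 1 := Real.exp_le_one_iff.2 ha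
    have h4 : Real.exp b = Real.exp a * Real.exp (b - a) := by
      rw [← Real.exp_add]; ring_nf
    nlinarith [Real.exp_pos a, Real.exp_pos (b - a)]

lemma det_ge {lam : ℝ} (hlam : 0 < lam) {M : Matrix (Fin N) (Fin N) ℝ}
    (hM : M.PosDef)
    (h : (M - lam • (1 : Matrix (Fin N) (Fin N) ℝ)).PosSemidef) : lam ^ N ≤ M.det := by
  have hH := hM.isHermitian
  have heig : ∀ i, lam ≤ hH.eigenvalues i := by
    intro i
    set v : Fin N → ℝ := ⇑(hH.eigenvectorBasis i) with hvdef
    have hMv : M *ᵥ v = hH.eigenvalues i • v := hH.mulVec_eigenvectorBasis i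
    have hnorm : eucNorm v = 1 := by
      have h1 : eucNorm v = ‖hH.eigenvectorBasis i‖ := enorm_eq v
      rw [h1, hH.eigenvectorBasis.orthonormal.1 i]
    have hv1 : v ⬝ᵥ v = 1 := by rw [dot_self_eq, hnorm]; norm_num
    have h2 := quad_lower h v
    rw [hv1] at h2
    rw [show M.mulVec v = hH.eigenvalues i • v from hMv, dotProduct_smul, smul_eq_mul,
      hv1] at h2
    simpa using h2
  rw [hH.det_eq_prod_eigenvalues]
  calc lam ^ N = ∏ _i : Fin N, lam := by rw [Finset.prod_const, Finset.card_univ]; simp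
    _ ≤ ∏ i, hH.eigenvalues i := Finset.prod_le_prod (fun _ _ => hlam.le) (fun i _ => heig i)
    _ = ∏ i, (hH.eigenvalues i : ℝ) := by norm_num

end Stmt17

open Stmt17

set_option maxHeartbeats 1000000

/-- **Central pathwise likelihood-ratio Lipschitz bound** in the proof of the key lemma
(Lemma 11) of the paper. -/
theorem stmt_17 {N : ℕ} (hN : 1 ≤ N) (t : ℕ) (Z : Set ℝ)
    (y : Fin (t + 1) → Fin N → ℝ)
    (Kmu musup KINV KD lam : ℝ)
    (hKmu : 0 ≤ Kmu) (hmusup : 0 ≤ musup) (hKINV : 0 ≤ KINV) (hKD : 0 ≤ KD)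
    (hlam : 1 < lam)
    (mu : Fin (t + 1) → ℝ → Fin N → ℝ)
    (C : Fin (t + 1) → ℝ → Matrix (Fin N) (Fin N) ℝ)
    (hPD : ∀ i, ∀ x ∈ Z, (C i x).PosDef)
    (hEig : ∀ i, ∀ x ∈ Z, (C i x - lam • (1 : Matrix (Fin N) (Fin N) ℝ)).PosSemidef)
    (hCinvLip : ∀ i, ∀ x ∈ Z, ∀ x' ∈ Z,
      specNorm ((C i x)⁻¹ - (C i x')⁻¹) ≤ KINV * |x - x'|)
    (hdetLip : ∀ i, ∀ x ∈ Z, ∀ x' ∈ Z,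
      |(C i x).det - (C i x').det| ≤ KD * |x - x'|)
    (hmuLip : ∀ i, ∀ x ∈ Z, ∀ x' ∈ Z, eucNorm (mu i x - mu i x') ≤ Kmu * |x - x'|)
    (hmuBdd : ∀ i, ∀ x ∈ Z, eucNorm (mu i x) ≤ musup) :
    ∀ x x' : Fin (t + 1) → ℝ, (∀ i, x i ∈ Z) → (∀ i, x' i ∈ Z) →
      |Lhat y mu C x - Lhat y mu C x'| ≤
        ((⨆ i : Fin (t + 1),
            (2 * Kmu * (eucNorm (y i) + musup) / lam + KINV * (eucNorm (y i) + musup) ^ 2)) /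
              lam ^ (((N : ℝ) * (t + 1)) / 2) +
          KD / (2 * lam ^ (((N : ℝ) * (t + 2)) / 2))) *
          ∑ i, |x i - x' i| := by
  have hlam0 : (0:ℝ) < lam := lt_trans one_pos hlam
  set c := Real.sqrt (lam ^ N) with hc
  have hc1 : (1:ℝ) < c := by
    have h1 : (1:ℝ) < lam ^ N := by
      calc (1:ℝ) = 1 ^ N := (one_pow N).symm
        _ < lam ^ N := pow_lt_pow_left₀ hlam (by norm_num) (by omega)
    calc (1:ℝ) = Real.sqrt 1 := Real.sqrt_one.symm
      _ < Real.sqrt (lam ^ N) := Real.sqrt_lt_sqrt (by norm_num) h1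
  have hc0 : (0:ℝ) < c := lt_trans one_pos hc1
  set Θ := ⨆ i : Fin (t + 1),
      (2 * Kmu * (eucNorm (y i) + musup) / lam + KINV * (eucNorm (y i) + musup) ^ 2) with hΘ
  have hθ_nonneg : ∀ i : Fin (t+1),
      0 ≤ 2 * Kmu * (eucNorm (y i) + musup) / lam + KINV * (eucNorm (y i) + musup) ^ 2 := by
    intro i
    have h1 := enorm_nonneg (y i)
    positivity
  have hθ_le : ∀ k : Fin (t+1),
      2 * Kmu * (eucNorm (y k) + musup) / lam + KINV * (eucNorm (y k) + musup) ^ 2 ≤ Θ := by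
    intro k
    rw [hΘ]
    exact le_ciSup (f := fun i : Fin (t+1) =>
      2 * Kmu * (eucNorm (y i) + musup) / lam + KINV * (eucNorm (y i) + musup) ^ 2)
      (Set.Finite.bddAbove (Set.finite_range _)) k
  have hΘ0 : 0 ≤ Θ := le_trans (hθ_nonneg 0) (hθ_le 0)
  set K := Θ / c ^ (t+1) + KD / (2 * c ^ (t+2)) with hK
  have sqrtdet_ge : ∀ i : Fin (t+1), ∀ z ∈ Z, c ≤ Real.sqrt ((C i z).det) := by
    intro i z hz
    rw [hc]
    exact Real.sqrt_le_sqrt (det_ge hlam0 (hPD i z hz) (hEig i z hz))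
  -- single-coordinate step bound
  have step : ∀ u : Fin (t+1) → ℝ, (∀ i, u i ∈ Z) → ∀ (k : Fin (t+1)) (a : ℝ), a ∈ Z →
      |Lhat y mu C u - Lhat y mu C (Function.update u k a)| ≤ K * |u k - a| := by
    intro u hu k a ha
    set w := Function.update u k a with hwdef
    have hwZ : ∀ i, w i ∈ Z := by
      intro i
      rcases eq_or_ne i k with rfl | hik
      · rw [hwdef, Function.update_self]; exact ha
      · rw [hwdef, Function.update_of_ne hik]; exact hu i
    have hwk : w k = a := Function.update_self k a u
    have hwne : ∀ i, i ≠ k → w i = u i := fun i hik => Function.update_of_ne hik a u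
    set q : (Fin (t+1) → ℝ) → Fin (t+1) → ℝ :=
      fun z i => (y i - mu i (z i)) ⬝ᵥ (C i (z i))⁻¹.mulVec (y i - mu i (z i)) with hq
    have hqnonneg : ∀ (z : Fin (t+1) → ℝ), (∀ i, z i ∈ Z) → ∀ i, 0 ≤ q z i := by
      intro z hz i
      exact psd_dot_nonneg ((hPD i (z i) (hz i)).inv.posSemidef) _
    set Qu := ∑ i, q u i with hQudef
    set Qw := ∑ i, q w i with hQwdef
    have hQu : 0 ≤ Qu := Finset.sum_nonneg fun i _ => hqnonneg u hu i
    have hQw : 0 ≤ Qw := Finset.sum_nonneg fun i _ => hqnonneg w hwZ i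
    have hQdiff : Qu - Qw = q u k - q w k := by
      rw [hQudef, hQwdef, ← Finset.sum_sub_distrib]
      refine Finset.sum_eq_single k (fun i _ hik => ?_) (fun h => absurd (Finset.mem_univ k) h)
      simp only [hq]
      rw [hwne i hik, sub_self]
    have hqk : |q u k - q w k| ≤ Θ * |u k - a| := by
      simp only [hq, hwk]
      refine le_trans (quad_diff hlam (abs_nonneg _) hKmu hKINV (y k) (mu k (u k)) (mu k a)
        (C k (u k)) (C k a) (hPD k _ (hu k)) (hEig k _ (hu k))
        (hmuLip k _ (hu k) a ha) (hmuBdd k _ (hu k)) (hmuBdd k a ha)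
        (hCinvLip k _ (hu k) a ha)) ?_
      exact mul_le_mul_of_nonneg_right (hθ_le k) (abs_nonneg _)
    set s1 := Real.sqrt ((C k (u k)).det) with hs1def
    set s2 := Real.sqrt ((C k a).det) with hs2def
    set P := ∏ i ∈ Finset.univ.erase k, Real.sqrt ((C i (u i)).det) with hPdef
    have hPw : ∏ i ∈ Finset.univ.erase k, Real.sqrt ((C i (w i)).det)
        = ∏ i ∈ Finset.univ.erase k, Real.sqrt ((C i (u i)).det) :=
      Finset.prod_congr rfl fun i hi => by rw [hwne i (Finset.ne_of_mem_erase hi)]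
    have hDu : ∏ i, Real.sqrt ((C i (u i)).det) = s1 * P := by
      rw [hs1def, hPdef, ← Finset.mul_prod_erase Finset.univ _ (Finset.mem_univ k)]
    have hDw : ∏ i, Real.sqrt ((C i (w i)).det) = s2 * P := by
      rw [hs2def, hPdef, ← Finset.mul_prod_erase Finset.univ _ (Finset.mem_univ k), hwk, hPw]
    have hPc : c ^ t ≤ P := by
      rw [hPdef]
      calc c ^ t = ∏ _i ∈ Finset.univ.erase k, c := by
            rw [Finset.prod_const, Finset.card_erase_of_mem (Finset.mem_univ k),
              Finset.card_univ]
            simp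
        _ ≤ ∏ i ∈ Finset.univ.erase k, Real.sqrt ((C i (u i)).det) :=
            Finset.prod_le_prod (fun _ _ => hc0.le) (fun i _ => sqrtdet_ge i (u i) (hu i))
    have hP0 : (0:ℝ) < P := lt_of_lt_of_le (pow_pos hc0 t) hPc
    have hs1 : c ≤ s1 := sqrtdet_ge k (u k) (hu k)
    have hs2 : c ≤ s2 := sqrtdet_ge k a ha
    have hs10 : (0:ℝ) < s1 := lt_of_lt_of_le hc0 hs1
    have hs20 : (0:ℝ) < s2 := lt_of_lt_of_le hc0 hs2
    have hsdiff : |s1 - s2| ≤ KD * |u k - a| / (2 * c) := by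
      have hsq1 : s1 ^ 2 = (C k (u k)).det := Real.sq_sqrt (hPD k _ (hu k)).det_pos.le
      have hsq2 : s2 ^ 2 = (C k a).det := Real.sq_sqrt (hPD k a ha).det_pos.le
      have hdet : |(C k (u k)).det - (C k a).det| ≤ KD * |u k - a| := hdetLip k _ (hu k) a ha
      have hfact : (s1 - s2) * (s1 + s2) = (C k (u k)).det - (C k a).det := by
        rw [← hsq1, ← hsq2]; ring
      have habs : |s1 - s2| * (s1 + s2) = |(C k (u k)).det - (C k a).det| := by
        rw [← hfact, abs_mul, abs_of_pos (show (0:ℝ) < s1 + s2 by linarith)]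
      rw [le_div_iff₀ (show (0:ℝ) < 2 * c by linarith)]
      calc |s1 - s2| * (2 * c) ≤ |s1 - s2| * (s1 + s2) :=
            mul_le_mul_of_nonneg_left (by linarith) (abs_nonneg _)
        _ = |(C k (u k)).det - (C k a).det| := habs
        _ ≤ KD * |u k - a| := hdet
    set E1 := Real.exp (-(1/2) * Qu) with hE1def
    set E2 := Real.exp (-(1/2) * Qw) with hE2def
    have hE2le : E2 ≤ 1 := by rw [hE2def]; exact Real.exp_le_one_iff.2 (by linarith)
    have hE20 : (0:ℝ) < E2 := by rw [hE2def]; exact Real.exp_pos _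
    have hE : |E1 - E2| ≤ Θ / 2 * |u k - a| := by
      rw [hE1def, hE2def]
      have h0 := exp_lip (a := -(1/2) * Qu) (b := -(1/2) * Qw)
        (by linarith) (by linarith)
      have h5 : |-(1/2) * Qu - -(1/2) * Qw| = 1/2 * |Qu - Qw| := by
        rw [show -(1/2) * Qu - -(1/2) * Qw = -(1/2) * (Qu - Qw) by ring, abs_mul]
        norm_num
      rw [h5, hQdiff] at h0
      refine le_trans h0 ?_
      linarith [hqk]
    have hLu : Lhat y mu C u = E1 / (s1 * P) := by
      unfold Lhat
      rw [hDu]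
    have hLw : Lhat y mu C w = E2 / (s2 * P) := by
      unfold Lhat
      rw [hDw]
    rw [hLu, hLw]
    have hdecomp : E1 / (s1 * P) - E2 / (s2 * P)
        = (E1 - E2) / (s1 * P) + E2 * (s2 - s1) / (s1 * (s2 * P)) := by
      field_simp [hs10.ne', hs20.ne', hP0.ne']
      ring
    rw [hdecomp]
    have habs2 : |E2 * (s2 - s1) / (s1 * (s2 * P))| = E2 * |s2 - s1| / (s1 * (s2 * P)) := by
      rw [abs_div, abs_mul, abs_of_pos hE20,
        abs_of_pos (mul_pos hs10 (mul_pos hs20 hP0))]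
    have habs1 : |(E1 - E2) / (s1 * P)| = |E1 - E2| / (s1 * P) := by
      rw [abs_div, abs_of_pos (mul_pos hs10 hP0)]
    have hden1 : c ^ (t+1) ≤ s1 * P := by
      calc c ^ (t+1) = c * c ^ t := by ring
        _ ≤ s1 * P := mul_le_mul hs1 hPc (pow_nonneg hc0.le t) hs10.le
    have hden2 : c ^ (t+2) ≤ s1 * (s2 * P) := by
      calc c ^ (t+2) = c * (c * c ^ t) := by ring
        _ ≤ s1 * (s2 * P) :=
            mul_le_mul hs1 (mul_le_mul hs2 hPc (pow_nonneg hc0.le t) hs20.le)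
              (mul_nonneg hc0.le (pow_nonneg hc0.le t)) hs10.le
    calc |(E1 - E2) / (s1 * P) + E2 * (s2 - s1) / (s1 * (s2 * P))|
        ≤ |(E1 - E2) / (s1 * P)| + |E2 * (s2 - s1) / (s1 * (s2 * P))| := abs_add_le _ _
      _ = |E1 - E2| / (s1 * P) + E2 * |s2 - s1| / (s1 * (s2 * P)) := by
          rw [habs1, habs2]
      _ ≤ (Θ / 2 * |u k - a|) / c ^ (t+1)
          + (1 * (KD * |u k - a| / (2 * c))) / c ^ (t+2) :=
          add_le_add
            (div_le_div₀ (mul_nonneg (by linarith) (abs_nonneg _)) hE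
              (pow_pos hc0 (t+1)) hden1)
            (div_le_div₀
              (mul_nonneg zero_le_one
                (div_nonneg (mul_nonneg hKD (abs_nonneg _)) (by linarith)))
              (mul_le_mul hE2le (by rw [abs_sub_comm]; exact hsdiff)
                (abs_nonneg _) zero_le_one)
              (pow_pos hc0 (t+2)) hden2)
      _ ≤ K * |u k - a| := by
          have h1 : Θ / 2 * |u k - a| / c ^ (t+1) = (Θ / 2 / c ^ (t+1)) * |u k - a| := by
            ring
          have h2 : 1 * (KD * |u k - a| / (2 * c)) / c ^ (t+2)
              = (KD / (2 * c * c ^ (t+2))) * |u k - a| := by ring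
          have hco : Θ / 2 / c ^ (t+1) + KD / (2 * c * c ^ (t+2)) ≤ K := by
            rw [hK]
            refine add_le_add
              (div_le_div₀ hΘ0 (by linarith) (pow_pos hc0 (t+1)) le_rfl)
              (div_le_div₀ hKD le_rfl
                (by nlinarith [pow_pos hc0 (t+2)]) ?_)
            nlinarith [pow_pos hc0 (t+2)]
          rw [h1, h2, ← add_mul]
          exact mul_le_mul_of_nonneg_right hco (abs_nonneg _)
  -- telescoping over coordinates
  have main : ∀ x x' : Fin (t+1) → ℝ, (∀ i, x i ∈ Z) → (∀ i, x' i ∈ Z) →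
      ∀ s : Finset (Fin (t+1)),
      |Lhat y mu C x - Lhat y mu C (s.piecewise x' x)| ≤ K * ∑ i ∈ s, |x i - x' i| := by
    intro x x' hx hx' s
    induction s using Finset.induction_on with
    | empty => simp
    | @insert a s ha ih =>
      have hpw : ∀ i, (s.piecewise x' x) i ∈ Z := by
        intro i
        by_cases h : i ∈ s
        · rw [Finset.piecewise_eq_of_mem _ _ _ h]; exact hx' i
        · rw [Finset.piecewise_eq_of_notMem _ _ _ h]; exact hx i
      have h1 := step (s.piecewise x' x) hpw a (x' a) (hx' a)
      have h2 : Function.update (s.piecewise x' x) a (x' a) = (insert a s).piecewise x' x :=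
        (Finset.piecewise_insert _ _ _ _).symm
      rw [h2] at h1
      have h3 : (s.piecewise x' x) a = x a := Finset.piecewise_eq_of_notMem _ _ _ ha
      rw [h3] at h1
      calc |Lhat y mu C x - Lhat y mu C ((insert a s).piecewise x' x)|
          ≤ |Lhat y mu C x - Lhat y mu C (s.piecewise x' x)|
            + |Lhat y mu C (s.piecewise x' x) - Lhat y mu C ((insert a s).piecewise x' x)| :=
            abs_sub_le _ _ _
        _ ≤ K * ∑ i ∈ s, |x i - x' i| + K * |x a - x' a| := add_le_add ih h1
        _ = K * ∑ i ∈ insert a s, |x i - x' i| := by rw [Finset.sum_insert ha]; ring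
  intro x x' hx hx'
  have hfin := main x x' hx hx' Finset.univ
  rw [Finset.piecewise_univ] at hfin
  refine le_trans hfin (mul_le_mul_of_nonneg_right ?_
    (Finset.sum_nonneg fun i _ => abs_nonneg _))
  have hcr : c = lam ^ ((N:ℝ)/2) := by
    rw [hc, Real.sqrt_eq_rpow, ← Real.rpow_natCast lam N, ← Real.rpow_mul hlam0.le]
    congr 1
    ring
  have hp : ∀ m : ℕ, lam ^ (((N:ℝ) * m) / 2) = c ^ m := by
    intro m
    rw [hcr, ← Real.rpow_natCast (lam ^ ((N:ℝ)/2)) m, ← Real.rpow_mul hlam0.le]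
    congr 1
    ring
  have hp1 := hp (t+1)
  have hp2 := hp (t+2)
  push_cast at hp1 hp2
  rw [hp1, hp2, hK]

-- #print axioms stmt_17
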